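/- Let n ≥ 1 and let Φ : FreeGroup (Fin n) ≃* FreeGroup (Fin n) be an automorphism of the free group of rank n. Then the fixed subgroup Fix(Φ) = { x ∈ FreeGroup (Fin n) : Φ(x) = x } is a finitely generated subgroup of FreeGroup (Fin n) (hence, being a subgroup of a free group, a free group of finite rank). -/

import Mathlib

set_option linter.unusedSectionVars false
open List
namespace GerstenProof
variable {α : Type*} [DecidableEq α]
def Canc (a b : α × Bool) : Prop := a.1 = b.1 ∧ a.2 = !b.2
def li (a : α × Bool) : α × Bool := (a.1, !a.2)
@[simp] lemma li_li (a : α × Bool) : li (li a) = a := by cases a; simp [li]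
lemma canc_iff_eq_li {a b : α × Bool} : Canc a b ↔ b = li a := by
  cases a; cases b
  constructor
  · rintro ⟨h1, h2⟩; simp only at h1 h2; subst h1; simp [li, Canc, h2]
  · intro h; simp only [li, Prod.mk.injEq] at h
    exact ⟨h.1.symm, by simp [h.2]⟩
def NC (a b : α × Bool) : Prop := ¬ Canc a b

theorem reduce_eq_self_iff (L : List (α × Bool)) :
    FreeGroup.reduce L = L ↔ List.Chain' NC L := by
  induction L with
  | nil => simp [List.Chain', List.isChain_nil]
  | cons x L ih =>
    constructor
    · intro h
      rw [FreeGroup.reduce.cons] at h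
      rcases hreduce : FreeGroup.reduce L with _ | ⟨hd, tl⟩
      · rw [hreduce] at h
        dsimp only at h
        have : L = [] := by
          injection h with _ h2
          exact h2.symm
        subst this; simp [List.Chain', List.isChain_singleton]
      · rw [hreduce] at h
        dsimp only at h
        split_ifs at h with hc
        · exfalso
          have h1 := congrArg List.length h
          have h2 : (FreeGroup.reduce L).length ≤ L.length :=
            FreeGroup.Red.length_le FreeGroup.reduce.red
          rw [hreduce] at h2
          simp at h1 h2
          omega
        · injection h with _ hL
          subst hL
          have hcL := ih.1 hreduce
          exact List.isChain_cons_cons.2 ⟨fun hcc => hc ⟨hcc.1, hcc.2⟩, hcL⟩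
    · intro h
      have hL : FreeGroup.reduce L = L := ih.2 h.tail
      rw [FreeGroup.reduce.cons, hL]
      cases L with
      | nil => rfl
      | cons b l =>
        dsimp only
        rw [if_neg]
        intro hcc
        exact (List.isChain_cons_cons.1 h).1 ⟨hcc.1, hcc.2⟩

lemma reduced_toWord (x : FreeGroup α) : List.Chain' NC x.toWord :=
  (reduce_eq_self_iff _).1 (FreeGroup.reduce_toWord x)

lemma toWord_mk_of_chain {L : List (α × Bool)} (h : List.Chain' NC L) :
    (FreeGroup.mk L).toWord = L := by
  rw [FreeGroup.toWord_mk, (reduce_eq_self_iff L).2 h]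

lemma norm_mk_of_chain {L : List (α × Bool)} (h : List.Chain' NC L) :
    (FreeGroup.mk L).norm = L.length := by
  rw [FreeGroup.norm, toWord_mk_of_chain h]

lemma norm_def (x : FreeGroup α) : x.norm = x.toWord.length := rfl

lemma chain_take {L : List (α × Bool)} (h : List.Chain' NC L) (k : ℕ) :
    List.Chain' NC (L.take k) := by
  rw [← List.take_append_drop k L] at h
  exact (List.isChain_append.1 h).1

lemma chain_drop {L : List (α × Bool)} (h : List.Chain' NC L) (k : ℕ) :
    List.Chain' NC (L.drop k) := by
  rw [← List.take_append_drop k L] at h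
  exact (List.isChain_append.1 h).2.1

lemma chain_append {L₁ L₂ : List (α × Bool)} (h1 : List.Chain' NC L₁)
    (h2 : List.Chain' NC L₂)
    (h : ∀ a ∈ L₁.getLast?, ∀ b ∈ L₂.head?, NC a b) :
    List.Chain' NC (L₁ ++ L₂) :=
  List.isChain_append.2 ⟨h1, h2, fun a ha b hb => h a ha b hb⟩

lemma head?_invRev (L : List (α × Bool)) :
    (FreeGroup.invRev L).head? = L.getLast?.map li := by
  rw [FreeGroup.invRev, List.head?_reverse,
    show (fun g : α × Bool => (g.1, !g.2)) = li from rfl]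
  simp [List.getLast?_map]


lemma getLast?_invRev (L : List (α × Bool)) :
    (FreeGroup.invRev L).getLast? = L.head?.map li := by
  rw [FreeGroup.invRev, List.getLast?_reverse,
    show (fun g : α × Bool => (g.1, !g.2)) = li from rfl]
  simp [List.head?_map]

theorem norm_mul_eq {x y : FreeGroup α}
    (h : ∀ a ∈ x.toWord.getLast?, ∀ b ∈ y.toWord.head?, NC a b) :
    (x * y).norm = x.norm + y.norm := by
  conv_lhs => rw [← FreeGroup.mk_toWord (x := x), ← FreeGroup.mk_toWord (x := y)]
  rw [FreeGroup.mul_mk,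
    norm_mk_of_chain (chain_append (reduced_toWord x) (reduced_toWord y) h),
    List.length_append, norm_def, norm_def]

theorem norm_inv_mul_eq {x y : FreeGroup α}
    (h : x.toWord.head? ≠ y.toWord.head?) :
    (x⁻¹ * y).norm = x.norm + y.norm := by
  have key : (x⁻¹ * y).norm = x⁻¹.norm + y.norm := by
    apply norm_mul_eq
    intro a ha b hb
    rw [FreeGroup.toWord_inv, getLast?_invRev] at ha
    intro hc
    rw [canc_iff_eq_li] at hc
    obtain ⟨a', ha', rfl⟩ := Option.map_eq_some_iff.1 (Option.mem_def.1 ha)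
    rw [hc] at hb
    simp only [li_li] at hb
    exact h (by rw [ha', Option.mem_def.1 hb])
  rw [key, FreeGroup.norm_inv_eq]

/-! ### Common prefix calculus -/

def lcp : List (α × Bool) → List (α × Bool) → ℕ
  | a :: as, b :: bs => if a = b then lcp as bs + 1 else 0
  | _, _ => 0

lemma lcp_le_left : ∀ A B : List (α × Bool), lcp A B ≤ A.length
  | [], _ => by cases ‹List _›  <;> simp [lcp]
  | _ :: _, [] => by simp [lcp]
  | a :: as, b :: bs => by
    rw [lcp]
    split_ifs
    · simpa using lcp_le_left as bs
    · simp

lemma lcp_le_right : ∀ A B : List (α × Bool), lcp A B ≤ B.length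
  | [], _ => by cases ‹List _›  <;> simp [lcp]
  | _ :: _, [] => by simp [lcp]
  | a :: as, b :: bs => by
    rw [lcp]
    split_ifs
    · simpa using lcp_le_right as bs
    · simp

lemma take_lcp_eq : ∀ A B : List (α × Bool), A.take (lcp A B) = B.take (lcp A B)
  | [], B => by simp [lcp]
  | a :: as, [] => by simp [lcp]
  | a :: as, b :: bs => by
    rw [lcp]
    split_ifs with h
    · subst h; simp [take_lcp_eq as bs]
    · simp

lemma lcp_head_ne : ∀ (A B : List (α × Bool)) (a b : α × Bool),
    (A.drop (lcp A B)).head? = some a → (B.drop (lcp A B)).head? = some b → a ≠ b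
  | [], B, a, b => by simp [lcp]
  | a' :: as, [], a, b => by simp [lcp]
  | a' :: as, b' :: bs, a, b => by
    rw [lcp]
    split_ifs with h
    · simpa using lcp_head_ne as bs a b
    · intro ha hb
      simp at ha hb
      subst ha; subst hb
      exact h

/-- Common-prefix package for two elements of the free group. -/
theorem cp_package (x y : FreeGroup α) :
    ∃ (g : FreeGroup α) (c : ℕ),
      g.toWord = x.toWord.take c ∧ c ≤ x.norm ∧ c ≤ y.norm ∧ g.norm = c ∧
      (x⁻¹ * y).norm + 2 * c = x.norm + y.norm ∧
      (g⁻¹ * x).toWord = x.toWord.drop c ∧ (g⁻¹ * y).toWord = y.toWord.drop c ∧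
      x.toWord.take c = y.toWord.take c := by
  classical
  set A := x.toWord with hA
  set B := y.toWord with hB
  set c := lcp A B with hc
  have hcA : c ≤ A.length := lcp_le_left A B
  have hcB : c ≤ B.length := lcp_le_right A B
  have htake : A.take c = B.take c := take_lcp_eq A B
  have chA : List.Chain' NC A := reduced_toWord x
  have chB : List.Chain' NC B := reduced_toWord y
  have hxA : FreeGroup.mk A = x := by rw [hA, FreeGroup.mk_toWord]
  have hyB : FreeGroup.mk B = y := by rw [hB, FreeGroup.mk_toWord]
  set g := FreeGroup.mk (A.take c) with hg
  have hgB : g = FreeGroup.mk (B.take c) := by rw [hg, htake]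
  have hgx : g⁻¹ * x = FreeGroup.mk (A.drop c) := by
    have h2 : FreeGroup.mk A = g * FreeGroup.mk (A.drop c) := by
      rw [hg, FreeGroup.mul_mk, List.take_append_drop]
    rw [← hxA, h2, inv_mul_cancel_left]
  have hgy : g⁻¹ * y = FreeGroup.mk (B.drop c) := by
    have h2 : FreeGroup.mk B = g * FreeGroup.mk (B.drop c) := by
      rw [hgB, FreeGroup.mul_mk, List.take_append_drop]
    rw [← hyB, h2, inv_mul_cancel_left]
  have e1 : (g⁻¹ * x).toWord = A.drop c := by
    rw [hgx]; exact toWord_mk_of_chain (chain_drop chA c)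
  have e2 : (g⁻¹ * y).toWord = B.drop c := by
    rw [hgy]; exact toWord_mk_of_chain (chain_drop chB c)
  have hnx : x.norm = A.length := by rw [norm_def, ← hA]
  have hny : y.norm = B.length := by rw [norm_def, ← hB]
  have hxy : (g⁻¹ * x)⁻¹ * (g⁻¹ * y) = x⁻¹ * y := by group
  have hng : g.norm = c := by
    rw [hg, norm_mk_of_chain (chain_take chA c), List.length_take]
    omega
  have main : (x⁻¹ * y).norm + 2 * c = x.norm + y.norm := by
    rcases ha : (A.drop c).head? with _ | a
    · rcases hb : (B.drop c).head? with _ | b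
      · have hA0 : A.drop c = [] := List.head?_eq_none_iff.1 ha
        have hB0 : B.drop c = [] := List.head?_eq_none_iff.1 hb
        have hlA : A.length ≤ c := by
          have := congrArg List.length hA0
          simp at this
          omega
        have hlB : B.length ≤ c := by
          have := congrArg List.length hB0
          simp at this
          omega
        have hx1 : x = g := by
          have := hgx
          rw [hA0] at this
          have h1 : g⁻¹ * x = 1 := by rw [this]; rfl
          have := mul_eq_one_iff_inv_eq.1 h1
          rw [← this]
          simp
        have hy1 : y = g := by
          have := hgy
          rw [hB0] at this
          have h1 : g⁻¹ * y = 1 := by rw [this]; rfl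
          have := mul_eq_one_iff_inv_eq.1 h1
          rw [← this]
          simp
        rw [hx1, hy1]
        simp only [inv_mul_cancel, FreeGroup.norm_one, hng]
        omega
      · have hne : (g⁻¹ * x).toWord.head? ≠ (g⁻¹ * y).toWord.head? := by
          rw [e1, e2, ha, hb]; simp
        have := norm_inv_mul_eq hne
        rw [hxy] at this
        rw [this, norm_def (g⁻¹*x), norm_def (g⁻¹*y), e1, e2, List.length_drop,
          List.length_drop, hnx, hny]
        omega
    · have hne : (g⁻¹ * x).toWord.head? ≠ (g⁻¹ * y).toWord.head? := by
        rw [e1, e2, ha]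
        rcases hb : (B.drop c).head? with _ | b
        · simp
        · have := lcp_head_ne A B a b ha hb
          simp [this]
      have := norm_inv_mul_eq hne
      rw [hxy] at this
      rw [this, norm_def (g⁻¹*x), norm_def (g⁻¹*y), e1, e2, List.length_drop,
        List.length_drop, hnx, hny]
      omega
  exact ⟨g, c, toWord_mk_of_chain (chain_take chA c), hcA, hcB, hng, main, e1, e2, htake⟩

/-! ### Flip lemma -/

lemma exists_flip (f : ℕ → Prop) (a b : ℕ) (hab : a ≤ b) (hfa : f a) (hfb : ¬ f b) :
    ∃ s, a ≤ s ∧ s < b ∧ f s ∧ ¬ f (s + 1) := by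
  by_contra hcon
  push_neg at hcon
  have : ∀ t, a ≤ t → t ≤ b → f t := by
    intro t
    induction t with
    | zero => intro h1 _; exact le_antisymm h1 (Nat.zero_le a) ▸ hfa
    | succ t ih =>
      intro h1 h2
      rcases Nat.lt_or_ge a (t+1) with h3 | h3
      · have hat : a ≤ t := by omega
        have hft : f t := ih hat (by omega)
        exact hcon t hat (by omega) hft
      · have : a = t + 1 := by omega
        exact this ▸ hfa
  exact hfb (this b hab le_rfl)

/-! ### Auxiliary index lemmas -/

lemma take_succ_get {β : Type*} (l : List β) (n : ℕ) (h : n < l.length) :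
    l.take (n+1) = l.take n ++ [l.get ⟨n, h⟩] := by
  rw [List.take_succ]
  simp [List.getElem?_eq_getElem h]

lemma take_concat_get {β : Type*} (l : List β) (c : ℕ) (h1 : 1 ≤ c) (h2 : c ≤ l.length) :
    l.take c = l.take (c-1) ++ [l.get ⟨c-1, by omega⟩] := by
  cases c with
  | zero => omega
  | succ c' =>
    simp only [Nat.succ_sub_one]
    exact take_succ_get l c' (by omega)

lemma getLast?_take {β : Type*} (l : List β) (c : ℕ) (h1 : 1 ≤ c) (h2 : c ≤ l.length) :
    (l.take c).getLast? = some (l.get ⟨c-1, by omega⟩) := by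
  rw [take_concat_get l c h1 h2, List.getLast?_concat]

/-! ### Lipschitz bounds -/

lemma lipschitz_word (φ : FreeGroup α →* FreeGroup α) (lam : ℕ)
    (hlam : ∀ a : α × Bool, (φ (FreeGroup.mk [a])).norm ≤ lam) :
    ∀ l : List (α × Bool), (φ (FreeGroup.mk l)).norm ≤ lam * l.length := by
  intro l
  induction l with
  | nil =>
    have h0 : FreeGroup.mk ([] : List (α × Bool)) = 1 := FreeGroup.one_eq_mk.symm
    simp [h0]
  | cons a l ih =>
    have h1 : FreeGroup.mk (a :: l) = FreeGroup.mk [a] * FreeGroup.mk l := by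
      rw [FreeGroup.mul_mk]; rfl
    rw [h1, map_mul]
    calc (φ (FreeGroup.mk [a]) * φ (FreeGroup.mk l)).norm
        ≤ (φ (FreeGroup.mk [a])).norm + (φ (FreeGroup.mk l)).norm :=
          FreeGroup.norm_mul_le _ _
      _ ≤ lam + lam * l.length := Nat.add_le_add (hlam a) ih
      _ = lam * (a :: l).length := by simp [List.length_cons]; ring

lemma lipschitz (φ : FreeGroup α →* FreeGroup α) (lam : ℕ)
    (hlam : ∀ a : α × Bool, (φ (FreeGroup.mk [a])).norm ≤ lam) (x : FreeGroup α) :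
    (φ x).norm ≤ lam * x.norm := by
  have := lipschitz_word φ lam hlam x.toWord
  rwa [FreeGroup.mk_toWord] at this

/-! ### Bounded cancellation via the Morse argument -/

theorem bounded_cancellation (φ : FreeGroup α →* FreeGroup α) (lam mu : ℕ)
    (hlam : ∀ a : α × Bool, (φ (FreeGroup.mk [a])).norm ≤ lam)
    (hmu : ∀ x : FreeGroup α, x.norm ≤ mu * (φ x).norm)
    (u v : FreeGroup α) (huv : (u * v).norm = u.norm + v.norm) :
    (φ u).norm + (φ v).norm ≤ (φ (u * v)).norm + 2 * (lam + 2 * lam * lam * mu) := by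
  classical
  have htoW : (u * v).toWord = u.toWord ++ v.toWord := by
    have hlen : ((u*v).toWord).length = (u.toWord ++ v.toWord).length := by
      rw [List.length_append, ← norm_def, ← norm_def, ← norm_def]
      exact huv
    exact (FreeGroup.toWord_mul_sublist u v).eq_of_length hlen
  set W : List (α × Bool) := u.toWord ++ v.toWord with hW
  have hchW : List.Chain' NC W := htoW ▸ reduced_toWord (u * v)
  have hmkW : FreeGroup.mk W = u * v := by rw [← htoW, FreeGroup.mk_toWord]
  set N : ℕ := W.length with hN
  set T : ℕ := u.norm with hT
  have hTN : T ≤ N := by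
    rw [hN, hW, List.length_append, hT, norm_def]; omega
  set p : ℕ → FreeGroup α := fun t => FreeGroup.mk (W.take t) with hp
  have hpT : p T = u := by
    show FreeGroup.mk (W.take T) = u
    have h0 : W.take T = u.toWord := by
      rw [hW, hT, norm_def]
      exact List.take_left
    rw [h0, FreeGroup.mk_toWord]
  have hpN : p N = u * v := by
    show FreeGroup.mk (W.take N) = u * v
    rw [hN, List.take_length, hmkW]
  have hp0 : p 0 = 1 := by
    show FreeGroup.mk (W.take 0) = 1
    rw [List.take_zero]
    exact FreeGroup.one_eq_mk.symm
  set Y : ℕ → FreeGroup α := fun t => (φ u)⁻¹ * φ (p t) with hY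
  have hseg : ∀ s t : ℕ, s ≤ t → (p s)⁻¹ * p t = FreeGroup.mk ((W.take t).drop s) := by
    intro s t hst
    show (FreeGroup.mk (W.take s))⁻¹ * FreeGroup.mk (W.take t) = _
    have h1 : (W.take t).take s = W.take s := by
      rw [List.take_take]; congr 1; omega
    have h2 : FreeGroup.mk (W.take t) = FreeGroup.mk (W.take s) *
        FreeGroup.mk ((W.take t).drop s) := by
      rw [FreeGroup.mul_mk]
      congr 1
      rw [← h1, List.take_append_drop]
    rw [h2, inv_mul_cancel_left]
  have hsegnorm : ∀ s t : ℕ, s ≤ t → t ≤ N → ((p s)⁻¹ * p t).norm = t - s := by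
    intro s t hst htN
    rw [hseg s t hst, norm_mk_of_chain (chain_drop (chain_take hchW t) s),
      List.length_drop, List.length_take]
    omega
  have hYd : ∀ s t : ℕ, (Y s)⁻¹ * Y t = φ ((p s)⁻¹ * p t) := by
    intro s t
    show ((φ u)⁻¹ * φ (p s))⁻¹ * ((φ u)⁻¹ * φ (p t)) = φ ((p s)⁻¹ * p t)
    rw [map_mul, map_inv]
    group
  have hstep : ∀ t : ℕ, t < N → ((Y t)⁻¹ * Y (t+1)).norm ≤ lam := by
    intro t ht
    rw [hYd]
    have htW : t < W.length := hN ▸ ht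
    have h1 : (p t)⁻¹ * p (t+1) = FreeGroup.mk [W.get ⟨t, htW⟩] := by
      rw [hseg t (t+1) (by omega)]
      congr 1
      rw [take_succ_get W t htW]
      have hlen : (W.take t).length = t := by
        rw [List.length_take]; omega
      rw [List.drop_left' hlen]
    rw [h1]
    exact hlam _
  have hYle : ∀ s t : ℕ, s ≤ t → t ≤ N → ((Y s)⁻¹ * Y t).norm ≤ lam * (t - s) := by
    intro s t hst htN
    induction t with
    | zero =>
      have : s = 0 := by omega
      subst this
      simp
    | succ t ih =>
      rcases Nat.lt_or_ge s (t+1) with h1 | h1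
      · have h2 : s ≤ t := by omega
        have h3 := ih h2 (by omega)
        have h4 := hstep t (by omega)
        have h5 : (Y s)⁻¹ * Y (t+1) = ((Y s)⁻¹ * Y t) * ((Y t)⁻¹ * Y (t+1)) := by group
        have h6 : ((Y s)⁻¹ * Y (t+1)).norm ≤ ((Y s)⁻¹ * Y t).norm + ((Y t)⁻¹ * Y (t+1)).norm := by
          rw [h5]; exact FreeGroup.norm_mul_le _ _
        have h7 : lam * (t + 1 - s) = lam * (t - s) + lam := by
          have : t + 1 - s = (t - s) + 1 := by omega
          rw [this]; ring
        omega
      · have : s = t + 1 := by omega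
        subst this
        simp
  have hYge : ∀ s t : ℕ, s ≤ t → t ≤ N → t - s ≤ mu * ((Y s)⁻¹ * Y t).norm := by
    intro s t hst htN
    rw [hYd]
    calc t - s = ((p s)⁻¹ * p t).norm := (hsegnorm s t hst htN).symm
      _ ≤ mu * (φ ((p s)⁻¹ * p t)).norm := hmu _
  obtain ⟨g, c, hgword, hcx, hcy, hng, hmain, e1, e2, htake⟩ := cp_package ((φ u)⁻¹) (φ v)
  have hmain' : (φ (u * v)).norm + 2 * c = (φ u).norm + (φ v).norm := by
    have h1 : ((φ u)⁻¹)⁻¹ * φ v = φ (u * v) := by rw [inv_inv, ← map_mul]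
    rw [← h1, ← FreeGroup.norm_inv_eq (x := φ u)]
    exact hmain
  suffices hcC : c ≤ lam + 2 * lam * lam * mu by omega
  rcases Nat.eq_zero_or_pos c with hc0 | hc1
  · omega
  set A : List (α × Bool) := ((φ u)⁻¹).toWord with hA
  set B : List (α × Bool) := (φ v).toWord with hB
  have hcA : c ≤ A.length := hcx
  have hcB : c ≤ B.length := hcy
  set ζ : α × Bool := A.get ⟨c-1, by omega⟩ with hζ
  have hY0 : Y 0 = (φ u)⁻¹ := by
    show (φ u)⁻¹ * φ (p 0) = (φ u)⁻¹
    rw [hp0, map_one, mul_one]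
  have hYT : Y T = 1 := by
    show (φ u)⁻¹ * φ (p T) = 1
    rw [hpT, inv_mul_cancel]
  have hYN : Y N = φ v := by
    show (φ u)⁻¹ * φ (p N) = φ v
    rw [hpN, map_mul, inv_mul_cancel_left]
  have hchA : List.Chain' NC A := reduced_toWord _
  have hchB : List.Chain' NC B := reduced_toWord _
  set f : ℕ → Prop := fun t => (g⁻¹ * Y t).toWord.head? = some (li ζ) with hf
  have hfT : f T := by
    show (g⁻¹ * Y T).toWord.head? = some (li ζ)
    rw [hYT, mul_one, FreeGroup.toWord_inv, head?_invRev, hgword,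
      getLast?_take A c hc1 hcA]
    rfl
  have hf0 : ¬ f 0 := by
    show ¬ (g⁻¹ * Y 0).toWord.head? = some (li ζ)
    rw [hY0, e1, List.head?_drop]
    intro hcon
    rcases Nat.lt_or_ge c A.length with hlt | hge
    · rw [List.getElem?_eq_getElem hlt] at hcon
      have hAc : A.get ⟨c, hlt⟩ = li ζ := by
        injection hcon
      have hadj : NC (A.get ⟨c-1, by omega⟩) (A.get ⟨c-1+1, by omega⟩) :=
        List.isChain_iff_getElem.1 hchA (c-1) (by omega)
      apply hadj
      rw [canc_iff_eq_li]
      have h1 : A.get ⟨c-1+1, by omega⟩ = A.get ⟨c, hlt⟩ := by congr 1; exact Fin.mk_eq_mk.mpr (by omega)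
      rw [h1, hAc, hζ]
    · rw [List.getElem?_eq_none hge] at hcon
      cases hcon
  have hfN : ¬ f N := by
    show ¬ (g⁻¹ * Y N).toWord.head? = some (li ζ)
    rw [hYN, e2, List.head?_drop]
    intro hcon
    rcases Nat.lt_or_ge c B.length with hlt | hge
    · rw [List.getElem?_eq_getElem hlt] at hcon
      have hBc : B.get ⟨c, hlt⟩ = li ζ := by injection hcon
      have hζB : ζ = B.get ⟨c-1, by omega⟩ := by
        have hA' := getLast?_take A c hc1 hcA
        have hB' := getLast?_take B c hc1 hcB
        rw [htake] at hA'
        rw [hB'] at hA'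
        injection hA' with hA''
        rw [hζ, ← hA'']
      have hadj : NC (B.get ⟨c-1, by omega⟩) (B.get ⟨c-1+1, by omega⟩) :=
        List.isChain_iff_getElem.1 hchB (c-1) (by omega)
      apply hadj
      rw [canc_iff_eq_li]
      have h1 : B.get ⟨c-1+1, by omega⟩ = B.get ⟨c, hlt⟩ := by congr 1; exact Fin.mk_eq_mk.mpr (by omega)
      rw [h1, hBc, hζB]
    · rw [List.getElem?_eq_none hge] at hcon
      cases hcon
  obtain ⟨s, -, hsT, hnfs, hfs1⟩ := exists_flip (fun t => ¬ f t) 0 T (Nat.zero_le T) hf0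
    (by simpa using hfT)
  rw [not_not] at hfs1
  obtain ⟨s', hTs', hs'N, hfs', hnfs'1⟩ := exists_flip f T N hTN hfT hfN
  have hfs1' : (g⁻¹ * Y (s+1)).toWord.head? = some (li ζ) := hfs1
  have hnfs' : ¬ (g⁻¹ * Y s).toWord.head? = some (li ζ) := hnfs
  have hfs'' : (g⁻¹ * Y s').toWord.head? = some (li ζ) := hfs'
  have hnfs'1' : ¬ (g⁻¹ * Y (s'+1)).toWord.head? = some (li ζ) := hnfs'1
  have hcross1 : (g⁻¹ * Y (s+1)).norm ≤ lam := by
    have hne : (g⁻¹ * Y (s+1)).toWord.head? ≠ (g⁻¹ * Y s).toWord.head? := by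
      rw [hfs1']
      exact fun hcon => hnfs' hcon.symm
    have h2 := norm_inv_mul_eq hne
    have h3 : (g⁻¹ * Y (s+1))⁻¹ * (g⁻¹ * Y s) = (Y (s+1))⁻¹ * Y s := by group
    rw [h3] at h2
    have h4 : ((Y (s+1))⁻¹ * Y s).norm = ((Y s)⁻¹ * Y (s+1)).norm := by
      rw [← FreeGroup.norm_inv_eq]
      congr 1
      group
    have h5 := hstep s (by omega)
    omega
  have hcross2 : (g⁻¹ * Y s').norm ≤ lam := by
    have hne : (g⁻¹ * Y s').toWord.head? ≠ (g⁻¹ * Y (s'+1)).toWord.head? := by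
      rw [hfs'']
      exact fun hcon => hnfs'1' hcon.symm
    have h2 := norm_inv_mul_eq hne
    have h3 : (g⁻¹ * Y s')⁻¹ * (g⁻¹ * Y (s'+1)) = (Y s')⁻¹ * Y (s'+1) := by group
    rw [h3] at h2
    have h5 := hstep s' (by omega)
    omega
  have hd1 : ((Y (s+1))⁻¹ * Y s').norm ≤ 2 * lam := by
    have h1 : (Y (s+1))⁻¹ * Y s' = (g⁻¹ * Y (s+1))⁻¹ * (g⁻¹ * Y s') := by group
    have h6 : ((Y (s+1))⁻¹ * Y s').norm ≤ ((g⁻¹ * Y (s+1))⁻¹).norm + (g⁻¹ * Y s').norm := by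
      rw [h1]; exact FreeGroup.norm_mul_le _ _
    rw [FreeGroup.norm_inv_eq] at h6
    omega
  have hgap : s' - (s+1) ≤ mu * (2 * lam) := by
    have h1 := hYge (s+1) s' (by omega) (by omega)
    have h2 : mu * ((Y (s+1))⁻¹ * Y s').norm ≤ mu * (2 * lam) :=
      Nat.mul_le_mul_left mu hd1
    omega
  have hTs1 : T - (s+1) ≤ mu * (2 * lam) := by omega
  have hfinal : c ≤ lam + lam * (mu * (2 * lam)) := by
    have h1 : (g⁻¹ : FreeGroup α) = (g⁻¹ * Y (s+1)) * ((Y (s+1))⁻¹ * Y T) := by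
      rw [hYT]
      group
    have h2 : (g⁻¹ : FreeGroup α).norm = c := by rw [FreeGroup.norm_inv_eq, hng]
    have h3 : ((Y (s+1))⁻¹ * Y T).norm ≤ lam * (T - (s+1)) := hYle (s+1) T (by omega) hTN
    have h4 : c ≤ (g⁻¹ * Y (s+1)).norm + ((Y (s+1))⁻¹ * Y T).norm := by
      rw [← h2]
      conv_lhs => rw [h1]
      exact FreeGroup.norm_mul_le _ _
    have h5 : lam * (T - (s+1)) ≤ lam * (mu * (2*lam)) := Nat.mul_le_mul_left lam hTs1
    omega
  have heq : lam * (mu * (2 * lam)) = 2 * lam * lam * mu := by ring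
  omega

/-! ### The fixed-subgroup machinery -/

section Main

variable {n : ℕ}

/-- prefix of a free-group element -/
def P (w : FreeGroup (Fin n)) (k : ℕ) : FreeGroup (Fin n) := FreeGroup.mk (w.toWord.take k)

/-- suffix of a free-group element -/
def S (w : FreeGroup (Fin n)) (k : ℕ) : FreeGroup (Fin n) := FreeGroup.mk (w.toWord.drop k)

/-- the vertex of the Schreier graph visited at time `k` by the loop of `w` -/
def V (φ : FreeGroup (Fin n) →* FreeGroup (Fin n)) (w : FreeGroup (Fin n)) (k : ℕ) :
    FreeGroup (Fin n) := (φ (P w k))⁻¹ * P w k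

variable (φ : FreeGroup (Fin n) →* FreeGroup (Fin n))

lemma P_mul_S (w : FreeGroup (Fin n)) (k : ℕ) : P w k * S w k = w := by
  rw [P, S, FreeGroup.mul_mk, List.take_append_drop, FreeGroup.mk_toWord]

lemma toWord_P (w : FreeGroup (Fin n)) (k : ℕ) : (P w k).toWord = w.toWord.take k :=
  toWord_mk_of_chain (chain_take (reduced_toWord w) k)

lemma toWord_S (w : FreeGroup (Fin n)) (k : ℕ) : (S w k).toWord = w.toWord.drop k :=
  toWord_mk_of_chain (chain_drop (reduced_toWord w) k)

lemma norm_P (w : FreeGroup (Fin n)) (k : ℕ) (h : k ≤ w.norm) : (P w k).norm = k := by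
  rw [norm_def, toWord_P, List.length_take]
  rw [norm_def] at h
  omega

lemma norm_S (w : FreeGroup (Fin n)) (k : ℕ) : (S w k).norm = w.norm - k := by
  rw [norm_def, toWord_S, List.length_drop, norm_def]

lemma phiP (w : FreeGroup (Fin n)) (k : ℕ) : φ (P w k) = P w k * (V φ w k)⁻¹ := by
  rw [V]; group

lemma phiS (w : FreeGroup (Fin n)) (hw : φ w = w) (k : ℕ) :
    φ (S w k) = V φ w k * S w k := by
  have h1 : φ (P w k) * φ (S w k) = P w k * S w k := by
    rw [← map_mul, P_mul_S, hw]
  have h2 : φ (S w k) = (φ (P w k))⁻¹ * (φ (P w k) * φ (S w k)) := by group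
  rw [h2, h1, V]
  group

lemma V_zero (w : FreeGroup (Fin n)) : V φ w 0 = 1 := by
  have h1 : P w 0 = 1 := by
    rw [P, List.take_zero]
    exact FreeGroup.one_eq_mk.symm
  rw [V, h1, map_one]
  simp

lemma V_norm (w : FreeGroup (Fin n)) (hw : φ w = w) : V φ w w.norm = 1 := by
  have h1 : P w w.norm = w := by
    rw [P, norm_def, List.take_length, FreeGroup.mk_toWord]
  rw [V, h1, hw]
  simp

lemma V_succ (w : FreeGroup (Fin n)) (k : ℕ) (h : k < w.norm) :
    V φ w (k+1) = (φ (FreeGroup.mk [w.toWord.get ⟨k, h⟩]))⁻¹ * V φ w k *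
      FreeGroup.mk [w.toWord.get ⟨k, h⟩] := by
  have hP : P w (k+1) = P w k * FreeGroup.mk [w.toWord.get ⟨k, h⟩] := by
    rw [P, P, take_succ_get w.toWord k h, ← FreeGroup.mul_mk]
  rw [V, V, hP, map_mul]
  group

/-- Type II structure: if the outgoing letter does not cancel with the last letter of the
vertex, then `φ(S k) = V k * S k` is a reduced product. -/
lemma II_str (w : FreeGroup (Fin n)) (hw : φ w = w) (k : ℕ) (hk2 : k < w.norm)
    {ℓ : Fin n × Bool} (hℓ : (V φ w k).toWord.getLast? = some ℓ)
    (hz : w.toWord.get ⟨k, hk2⟩ ≠ li ℓ) :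
    (φ (S w k)).norm = (V φ w k).norm + (w.norm - k) := by
  have hj : (V φ w k * S w k).norm = (V φ w k).norm + (S w k).norm := by
    apply norm_mul_eq
    intro a ha b hb
    rw [hℓ] at ha
    rw [toWord_S, List.head?_drop, List.getElem?_eq_getElem hk2] at hb
    have ha' : ℓ = a := by simpa using ha
    have hb' : w.toWord[k] = b := by simpa using hb
    subst ha'
    subst hb'
    intro hcanc
    apply hz
    have := canc_iff_eq_li.1 hcanc
    exact this
  rw [phiS φ w hw k, hj, norm_S]

/-- Type I structure: if the incoming letter is not the last letter of the vertex,
then `φ(P k) = P k * (V k)⁻¹` is a reduced product. -/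
lemma I_str (w : FreeGroup (Fin n)) (k : ℕ) (hk1 : 1 ≤ k) (hk2 : k ≤ w.norm)
    {ℓ : Fin n × Bool} (hℓ : (V φ w k).toWord.getLast? = some ℓ)
    (hy : w.toWord.get ⟨k-1, Nat.lt_of_lt_of_le (by omega) hk2⟩ ≠ ℓ) :
    (φ (P w k)).norm = k + (V φ w k).norm := by
  have hk2' : k ≤ w.toWord.length := by rw [← norm_def]; exact hk2
  have hj : (P w k * (V φ w k)⁻¹).norm = (P w k).norm + ((V φ w k)⁻¹).norm := by
    apply norm_mul_eq
    intro a ha b hb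
    rw [toWord_P, getLast?_take w.toWord k hk1 hk2'] at ha
    rw [FreeGroup.toWord_inv, head?_invRev, hℓ] at hb
    have ha' : w.toWord.get ⟨k-1, by omega⟩ = a := by simpa using ha
    have hb' : li ℓ = b := by simpa using hb
    subst ha'
    subst hb'
    intro hcanc
    apply hy
    have h3 := canc_iff_eq_li.1 hcanc
    have h2 := congrArg li h3
    rw [li_li, li_li] at h2
    exact h2.symm
  rw [phiP φ w k, hj, FreeGroup.norm_inv_eq, norm_P w k hk2]

/-- adjacent letters of a reduced word do not cancel -/
lemma adj_nc (w : FreeGroup (Fin n)) (k : ℕ) (h : k < w.norm) (h1 : 1 ≤ k) :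
    w.toWord.get ⟨k, h⟩ ≠ li (w.toWord.get ⟨k-1, by have h2 := h; rw [norm_def] at h2; omega⟩) := by
  have hadj : NC (w.toWord.get ⟨k-1, by rw [← norm_def]; omega⟩)
      (w.toWord.get ⟨k-1+1, by rw [← norm_def]; omega⟩) :=
    List.isChain_iff_getElem.1 (reduced_toWord w) (k-1) (by
    rw [← norm_def]; omega)
  intro hcon
  apply hadj
  rw [canc_iff_eq_li]
  have h2 : w.toWord.get ⟨k-1+1, by rw [← norm_def]; omega⟩ = w.toWord.get ⟨k, h⟩ := by
    congr 1
    exact Fin.mk_eq_mk.mpr (by omega)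
  rw [h2, hcon]

/-- Determinism at large vertices: the outgoing letter of a fixed loop at a vertex of
norm `> Cb` is determined by the vertex and the incoming letter. -/
lemma determinism (Cb : ℕ)
    (hbc : ∀ u v : FreeGroup (Fin n), (u*v).norm = u.norm + v.norm →
      (φ u).norm + (φ v).norm ≤ (φ (u*v)).norm + 2 * Cb)
    {w w' : FreeGroup (Fin n)} (hw : φ w = w) (hw' : φ w' = w')
    {k k' : ℕ} (hk1 : 1 ≤ k) (hk2 : k < w.norm) (hk1' : 1 ≤ k') (hk2' : k' < w'.norm)
    (hu : V φ w' k' = V φ w k)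
    (hbig : Cb < (V φ w k).norm)
    (hy : w.toWord.get ⟨k-1, Nat.lt_of_le_of_lt (Nat.sub_le k 1) hk2⟩ =
      w'.toWord.get ⟨k'-1, Nat.lt_of_le_of_lt (Nat.sub_le k' 1) hk2'⟩) :
    w.toWord.get ⟨k, hk2⟩ = w'.toWord.get ⟨k', hk2'⟩ := by
  have hu1 : V φ w k ≠ 1 := by
    intro h
    rw [h, FreeGroup.norm_one] at hbig
    omega
  obtain ⟨ℓ, hℓ⟩ : ∃ ℓ, (V φ w k).toWord.getLast? = some ℓ := by
    cases h : (V φ w k).toWord.getLast? with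
    | some ℓ => exact ⟨ℓ, rfl⟩
    | none =>
      exfalso
      rw [List.getLast?_eq_none_iff] at h
      exact hu1 (FreeGroup.toWord_eq_nil_iff.1 h)
  have hℓ' : (V φ w' k').toWord.getLast? = some ℓ := by rw [hu]; exact hℓ
  by_contra hne
  have hyz : w.toWord.get ⟨k, hk2⟩ ≠
      li (w.toWord.get ⟨k-1, Nat.lt_of_le_of_lt (Nat.sub_le k 1) hk2⟩) :=
    adj_nc w k hk2 hk1
  have hyz' : w'.toWord.get ⟨k', hk2'⟩ ≠
      li (w.toWord.get ⟨k-1, Nat.lt_of_le_of_lt (Nat.sub_le k 1) hk2⟩) := by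
    rw [hy]
    exact adj_nc w' k' hk2' hk1'
  have hk2l : k ≤ w.toWord.length := by
    rw [← norm_def]; omega
  have hk2l' : k' ≤ w'.toWord.length := by
    rw [← norm_def]; omega
  -- some norm abbreviations
  have hnP : (P w k).norm = k := norm_P w k (le_of_lt hk2)
  have hnP' : (P w' k').norm = k' := norm_P w' k' (le_of_lt hk2')
  have hnS : (S w k).norm = w.norm - k := norm_S w k
  have hnS' : (S w' k').norm = w'.norm - k' := norm_S w' k'
  rcases eq_or_ne (w.toWord.get ⟨k, hk2⟩) (li ℓ) with hzeq | hzne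
  · -- out-letter of w cancels the vertex: type I at (w,k), type II at (w',k')
    have hz'ne : w'.toWord.get ⟨k', hk2'⟩ ≠ li ℓ := by
      rw [← hzeq]
      exact fun h => hne h.symm
    have hyℓ : w.toWord.get ⟨k-1, Nat.lt_of_le_of_lt (Nat.sub_le k 1) hk2⟩ ≠ ℓ := by
      intro h
      apply hyz
      rw [hzeq, h]
    have hI := I_str φ w k hk1 (le_of_lt hk2) hℓ hyℓ
    have hII := II_str φ w' hw' k' hk2' hℓ' hz'ne
    rw [hu] at hII
    have hjunc : (P w k * S w' k').norm = (P w k).norm + (S w' k').norm := by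
      apply norm_mul_eq
      intro a ha b hb
      rw [toWord_P, getLast?_take w.toWord k hk1 hk2l] at ha
      rw [toWord_S, List.head?_drop, List.getElem?_eq_getElem hk2'] at hb
      have ha' : w.toWord.get ⟨k-1, Nat.lt_of_le_of_lt (Nat.sub_le k 1) hk2⟩ = a := by
        simpa using ha
      have hb' : w'.toWord[k'] = b := by simpa using hb
      subst ha'
      subst hb'
      intro hcanc
      exact hyz' (canc_iff_eq_li.1 hcanc)
    have hphi : φ (P w k * S w' k') = P w k * S w' k' := by
      rw [map_mul, phiP, phiS φ w' hw', hu]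
      group
    have hBC := hbc (P w k) (S w' k') hjunc
    rw [hphi, hjunc, hI, hII, hnP, hnS'] at hBC
    omega
  · rcases eq_or_ne (w'.toWord.get ⟨k', hk2'⟩) (li ℓ) with hz'eq | hz'ne
    · -- mirror case: type I at (w',k'), type II at (w,k)
      have hyℓ : w.toWord.get ⟨k-1, Nat.lt_of_le_of_lt (Nat.sub_le k 1) hk2⟩ ≠ ℓ := by
        intro h
        apply hyz'
        rw [hz'eq, h]
      have hy'ℓ : w'.toWord.get ⟨k'-1, Nat.lt_of_le_of_lt (Nat.sub_le k' 1) hk2'⟩ ≠ ℓ := by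
        rw [← hy]
        exact hyℓ
      have hI' := I_str φ w' k' hk1' (le_of_lt hk2') hℓ' hy'ℓ
      rw [hu] at hI'
      have hII := II_str φ w hw k hk2 hℓ hzne
      have hjunc : (P w' k' * S w k).norm = (P w' k').norm + (S w k).norm := by
        apply norm_mul_eq
        intro a ha b hb
        rw [toWord_P, getLast?_take w'.toWord k' hk1' hk2l'] at ha
        rw [toWord_S, List.head?_drop, List.getElem?_eq_getElem hk2] at hb
        have ha' : w'.toWord.get ⟨k'-1, Nat.lt_of_le_of_lt (Nat.sub_le k' 1) hk2'⟩ = a := by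
          simpa using ha
        have hb' : w.toWord[k] = b := by simpa using hb
        subst ha'
        subst hb'
        intro hcanc
        apply hyz
        rw [hy]
        exact canc_iff_eq_li.1 hcanc
      have hphi : φ (P w' k' * S w k) = P w' k' * S w k := by
        rw [map_mul, phiP, phiS φ w hw, hu]
        group
      have hBC := hbc (P w' k') (S w k) hjunc
      rw [hphi, hjunc, hI', hII, hnP', hnS] at hBC
      omega
    · -- type II at both
      have hIIa := II_str φ w hw k hk2 hℓ hzne
      have hIIb := II_str φ w' hw' k' hk2' hℓ' hz'ne
      rw [hu] at hIIb
      have hjunc : ((S w k)⁻¹ * S w' k').norm = ((S w k)⁻¹).norm + (S w' k').norm := by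
        rw [FreeGroup.norm_inv_eq]
        apply norm_inv_mul_eq
        rw [toWord_S, toWord_S, List.head?_drop, List.head?_drop,
          List.getElem?_eq_getElem hk2, List.getElem?_eq_getElem hk2']
        intro hcon
        exact hne (Option.some.inj hcon)
      have hphi : φ ((S w k)⁻¹ * S w' k') = (S w k)⁻¹ * S w' k' := by
        rw [map_mul, map_inv, phiS φ w hw, phiS φ w' hw', hu]
        group
      have hBC := hbc ((S w k)⁻¹) (S w' k') hjunc
      rw [hphi, hjunc] at hBC
      have hrw1 : (φ ((S w k)⁻¹)).norm = (φ (S w k)).norm := by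
        rw [map_inv, FreeGroup.norm_inv_eq]
      rw [hrw1, hIIa, hIIb, FreeGroup.norm_inv_eq, hnS, hnS'] at hBC
      omega

/-! ### The canonical continuation and excursions -/

variable (d : Fin n × Bool)

open Classical in
/-- the canonical outgoing letter at vertex `u` with incoming letter `y` -/
noncomputable def out (u : FreeGroup (Fin n)) (y : Fin n × Bool) : Fin n × Bool :=
  if h : ∃ q : FreeGroup (Fin n) × ℕ, φ q.1 = q.1 ∧ 1 ≤ q.2 ∧ q.2 + 1 ≤ q.1.norm ∧
      V φ q.1 q.2 = u ∧ q.1.toWord.getD (q.2-1) d = y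
  then (Classical.choose h).1.toWord.getD (Classical.choose h).2 d
  else y

lemma out_eq (Cb : ℕ)
    (hbc : ∀ u v : FreeGroup (Fin n), (u*v).norm = u.norm + v.norm →
      (φ u).norm + (φ v).norm ≤ (φ (u*v)).norm + 2 * Cb)
    {w : FreeGroup (Fin n)} (hw : φ w = w) {k : ℕ} (hk1 : 1 ≤ k) (hk2 : k + 1 ≤ w.norm)
    (hbig : Cb < (V φ w k).norm) :
    out φ d (V φ w k) (w.toWord.getD (k-1) d) = w.toWord.getD k d := by
  classical
  have hex : ∃ q : FreeGroup (Fin n) × ℕ, φ q.1 = q.1 ∧ 1 ≤ q.2 ∧ q.2 + 1 ≤ q.1.norm ∧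
      V φ q.1 q.2 = V φ w k ∧ q.1.toWord.getD (q.2-1) d = w.toWord.getD (k-1) d :=
    ⟨(w, k), hw, hk1, hk2, rfl, rfl⟩
  rw [out, dif_pos hex]
  obtain ⟨hq1, hq2, hq3, hq4, hq5⟩ := Classical.choose_spec hex
  set q := Classical.choose hex with hqdef
  have hbig' : Cb < (V φ q.1 q.2).norm := by rw [hq4]; exact hbig
  have hkw : k < w.norm := by omega
  have hkq : q.2 < q.1.norm := by omega
  have hlen : q.2 - 1 < q.1.toWord.length := by
    rw [← norm_def]; omega
  have hlenw : k - 1 < w.toWord.length := by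
    rw [← norm_def]; omega
  have hy : q.1.toWord.get ⟨q.2-1, hlen⟩ = w.toWord.get ⟨k-1, hlenw⟩ := by
    have h1 := List.getD_eq_getElem q.1.toWord d hlen
    have h2 := List.getD_eq_getElem w.toWord d hlenw
    rw [h1, h2] at hq5
    exact hq5
  have hdet := determinism φ Cb hbc hq1 hw hq2 hkq hk1 hkw hq4.symm hbig' hy
  rw [List.getD_eq_getElem q.1.toWord d (show q.2 < q.1.toWord.length by rw [← norm_def]; omega),
    List.getD_eq_getElem w.toWord d (show k < w.toWord.length by rw [← norm_def]; omega)]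
  exact hdet

/-- canonical excursion orbit: state = (vertex, next letter to read) -/
noncomputable def orbit (u0 : FreeGroup (Fin n)) (y0 : Fin n × Bool) :
    ℕ → FreeGroup (Fin n) × (Fin n × Bool) :=
  fun t => Nat.rec (u0, y0) (fun _ p =>
    ((φ (FreeGroup.mk [p.2]))⁻¹ * p.1 * FreeGroup.mk [p.2],
      out φ d ((φ (FreeGroup.mk [p.2]))⁻¹ * p.1 * FreeGroup.mk [p.2]) p.2)) t

lemma orbit_zero (u0 : FreeGroup (Fin n)) (y0 : Fin n × Bool) :
    orbit φ d u0 y0 0 = (u0, y0) := rfl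

lemma orbit_succ (u0 : FreeGroup (Fin n)) (y0 : Fin n × Bool) (t : ℕ) :
    orbit φ d u0 y0 (t+1) =
      ((φ (FreeGroup.mk [(orbit φ d u0 y0 t).2]))⁻¹ * (orbit φ d u0 y0 t).1 *
          FreeGroup.mk [(orbit φ d u0 y0 t).2],
        out φ d ((φ (FreeGroup.mk [(orbit φ d u0 y0 t).2]))⁻¹ * (orbit φ d u0 y0 t).1 *
          FreeGroup.mk [(orbit φ d u0 y0 t).2]) (orbit φ d u0 y0 t).2) := rfl

lemma orbit_matches (Cb : ℕ)
    (hbc : ∀ u v : FreeGroup (Fin n), (u*v).norm = u.norm + v.norm →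
      (φ u).norm + (φ v).norm ≤ (φ (u*v)).norm + 2 * Cb)
    {w : FreeGroup (Fin n)} (hw : φ w = w) (a r : ℕ) (har : a + r ≤ w.norm)
    (hlarge : ∀ t, 1 ≤ t → t < r → Cb < (V φ w (a+t)).norm) :
    ∀ t, t < r → orbit φ d (V φ w a) (w.toWord.getD a d) t =
      (V φ w (a+t), w.toWord.getD (a+t) d) := by
  intro t
  induction t with
  | zero => intro _; rw [orbit_zero]; simp
  | succ t ih =>
    intro htr
    have ih' := ih (by omega)
    rw [orbit_succ, ih']
    have hlt : a + t < w.norm := by omega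
    have hltl : a + t < w.toWord.length := by rw [← norm_def]; omega
    have hgd : w.toWord.getD (a+t) d = w.toWord.get ⟨a+t, hltl⟩ :=
      List.getD_eq_getElem w.toWord d hltl
    have hfst : (φ (FreeGroup.mk [w.toWord.getD (a+t) d]))⁻¹ * V φ w (a+t) *
        FreeGroup.mk [w.toWord.getD (a+t) d] = V φ w (a+t+1) := by
      rw [hgd, V_succ φ w (a+t) hlt]
    simp only [hfst]
    have hsnd : out φ d (V φ w (a+t+1)) (w.toWord.getD (a+t) d) =
        w.toWord.getD (a+t+1) d := by
      have h1 : w.toWord.getD (a+t) d = w.toWord.getD ((a+t+1)-1) d := by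
        congr 1
      rw [h1]
      exact out_eq φ d Cb hbc hw (by omega) (by omega) (hlarge (t+1) (by omega) htr)
    rw [hsnd]
    have harw : a + (t+1) = a + t + 1 := by omega
    rw [harw]

/-- exit time of the canonical excursion -/
noncomputable def Texit (Cb : ℕ) (u0 : FreeGroup (Fin n)) (y0 : Fin n × Bool) : ℕ :=
  sInf {t | 1 ≤ t ∧ ((orbit φ d u0 y0 t).1).norm ≤ Cb}

lemma texit_eq (Cb : ℕ)
    (hbc : ∀ u v : FreeGroup (Fin n), (u*v).norm = u.norm + v.norm →
      (φ u).norm + (φ v).norm ≤ (φ (u*v)).norm + 2 * Cb)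
    {w : FreeGroup (Fin n)} (hw : φ w = w) (a r : ℕ) (hr1 : 1 ≤ r) (har : a + r ≤ w.norm)
    (hlarge : ∀ t, 1 ≤ t → t < r → Cb < (V φ w (a+t)).norm)
    (hsmall : (V φ w (a+r)).norm ≤ Cb) :
    Texit φ d Cb (V φ w a) (w.toWord.getD a d) = r := by
  have hmatch := orbit_matches φ d Cb hbc hw a r har hlarge
  have hend : (orbit φ d (V φ w a) (w.toWord.getD a d) r).1 = V φ w (a+r) := by
    cases r with
    | zero => omega
    | succ r' =>
      rw [orbit_succ, hmatch r' (by omega)]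
      have hlt : a + r' < w.norm := by omega
      have hltl : a + r' < w.toWord.length := by rw [← norm_def]; omega
      have hgd : w.toWord.getD (a+r') d = w.toWord.get ⟨a+r', hltl⟩ :=
        List.getD_eq_getElem w.toWord d hltl
      simp only []
      rw [hgd, ← V_succ φ w (a+r') hlt]
      have harw : a + (r'+1) = a + r' + 1 := by omega
      rw [harw]
  have hrmem : r ∈ {t | 1 ≤ t ∧ ((orbit φ d (V φ w a) (w.toWord.getD a d) t).1).norm ≤ Cb} := by
    refine ⟨hr1, ?_⟩
    rw [hend]
    exact hsmall
  show sInf {t | 1 ≤ t ∧ ((orbit φ d (V φ w a) (w.toWord.getD a d) t).1).norm ≤ Cb} = r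
  apply _root_.le_antisymm
  · exact Nat.sInf_le hrmem
  · by_contra hcon
    push_neg at hcon
    have hmem := Nat.sInf_mem (⟨r, hrmem⟩ :
      {t | 1 ≤ t ∧ ((orbit φ d (V φ w a) (w.toWord.getD a d) t).1).norm ≤ Cb}.Nonempty)
    obtain ⟨h1, h2⟩ := hmem
    set m := sInf {t | 1 ≤ t ∧ ((orbit φ d (V φ w a) (w.toWord.getD a d) t).1).norm ≤ Cb}
    have hm := hmatch m (by omega)
    rw [hm] at h2
    dsimp only at h2
    have := hlarge m h1 (by omega)
    omega

/-! ### Finiteness of balls -/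

lemma ball_finite (m : ℕ) : {g : FreeGroup (Fin n) | g.norm ≤ m}.Finite := by
  have h1 : {g : FreeGroup (Fin n) | g.norm ≤ m} =
      FreeGroup.toWord ⁻¹' {l : List (Fin n × Bool) | l.length ≤ m} := rfl
  rw [h1]
  exact (List.finite_length_le _ m).preimage (FreeGroup.toWord_injective.injOn)

noncomputable def ballF (m : ℕ) : Finset (FreeGroup (Fin n)) := (ball_finite (n := n) m).toFinset

lemma mem_ballF {m : ℕ} {g : FreeGroup (Fin n)} : g ∈ ballF (n := n) m ↔ g.norm ≤ m := by
  rw [ballF, Set.Finite.mem_toFinset]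
  rfl

/-- bound for all excursion lengths -/
noncomputable def Eb (Cb : ℕ) : ℕ :=
  ((ballF (n := n) Cb) ×ˢ (Finset.univ : Finset (Fin n × Bool))).sup
    (fun q => Texit φ d Cb q.1 q.2)

/-- From any position one reaches a small vertex within `Eb` steps. -/
lemma next_small (Cb : ℕ)
    (hbc : ∀ u v : FreeGroup (Fin n), (u*v).norm = u.norm + v.norm →
      (φ u).norm + (φ v).norm ≤ (φ (u*v)).norm + 2 * Cb)
    {w : FreeGroup (Fin n)} (hw : φ w = w) :
    ∀ k, ∃ k', k ≤ w.norm → (k ≤ k' ∧ k' ≤ w.norm ∧ k' ≤ k + Eb φ d Cb ∧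
      (V φ w k').norm ≤ Cb) := by
  intro k
  classical
  by_cases hk : k ≤ w.norm
  swap
  · exact ⟨0, fun h => absurd h hk⟩
  by_cases hsm : (V φ w k).norm ≤ Cb
  · exact ⟨k, fun _ => ⟨le_rfl, hk, by omega, hsm⟩⟩
  push_neg at hsm
  have hk0 : k ≠ 0 := by
    intro h
    rw [h, V_zero, FreeGroup.norm_one] at hsm
    omega
  have hkL : k ≠ w.norm := by
    intro h
    rw [h, V_norm φ w hw, FreeGroup.norm_one] at hsm
    omega
  set Pr : ℕ → Prop := fun j => (V φ w j).norm ≤ Cb with hPr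
  have hP0 : Pr 0 := by
    rw [hPr]
    simp only []
    rw [V_zero, FreeGroup.norm_one]
    omega
  set a := Nat.findGreatest Pr k with hadef
  have ha : Pr a := Nat.findGreatest_spec (Nat.zero_le k) hP0
  have hak : a ≤ k := Nat.findGreatest_le k
  have hakne : a ≠ k := by
    intro h
    exact absurd (h ▸ ha : Pr k) (not_le.mpr hsm)
  have hmid : ∀ j, a < j → j ≤ k → ¬ Pr j := fun j h1 h2 =>
    Nat.findGreatest_is_greatest (hadef ▸ h1) h2
  have hQex : ∃ t, 1 ≤ t ∧ (V φ w (a+t)).norm ≤ Cb := by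
    refine ⟨w.norm - a, by omega, ?_⟩
    have h1 : a + (w.norm - a) = w.norm := by omega
    rw [h1, V_norm φ w hw, FreeGroup.norm_one]
    omega
  set r := Nat.find hQex with hrdef
  obtain ⟨hr1, hrsmall⟩ := Nat.find_spec hQex
  have hrmin : ∀ t, t < r → ¬ (1 ≤ t ∧ (V φ w (a+t)).norm ≤ Cb) := fun t ht =>
    Nat.find_min hQex (hrdef ▸ ht)
  have har : a + r ≤ w.norm := by
    have h2 : r ≤ w.norm - a := Nat.find_le ⟨by omega, by
      have h1 : a + (w.norm - a) = w.norm := by omega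
      rw [h1, V_norm φ w hw, FreeGroup.norm_one]
      omega⟩
    omega
  have hlarge : ∀ t, 1 ≤ t → t < r → Cb < (V φ w (a+t)).norm := by
    intro t h1 h2
    have := hrmin t h2
    push_neg at this
    exact this h1
  have hkr : k < a + r := by
    by_contra hcon
    push_neg at hcon
    have h1 : 1 ≤ r := hr1
    have h2 := hmid (a+r) (by omega) (by omega)
    exact h2 hrsmall
  have htex := texit_eq φ d Cb hbc hw a r hr1 har hlarge hrsmall
  have hTle : Texit φ d Cb (V φ w a) (w.toWord.getD a d) ≤ Eb φ d Cb := by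
    show Texit φ d Cb (V φ w a) (w.toWord.getD a d) ≤
      ((ballF (n := n) Cb) ×ˢ (Finset.univ : Finset (Fin n × Bool))).sup
      (fun q => Texit φ d Cb q.1 q.2)
    have hb : ((V φ w a, w.toWord.getD a d) : FreeGroup (Fin n) × (Fin n × Bool)) ∈
        (ballF (n := n) Cb) ×ˢ (Finset.univ : Finset (Fin n × Bool)) := by
      rw [Finset.mem_product]
      exact ⟨mem_ballF.2 ha, Finset.mem_univ _⟩
    exact Finset.le_sup
      (f := fun q : FreeGroup (Fin n) × (Fin n × Bool) => Texit φ d Cb q.1 q.2) hb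
  refine ⟨a + r, fun _ => ⟨by omega, har, by omega, hrsmall⟩⟩

/-- The counting argument: if all repetitions are antidiagonal, the length is bounded. -/
lemma count_bound (Cb : ℕ)
    (hbc : ∀ u v : FreeGroup (Fin n), (u*v).norm = u.norm + v.norm →
      (φ u).norm + (φ v).norm ≤ (φ (u*v)).norm + 2 * Cb)
    {w : FreeGroup (Fin n)} (hw : φ w = w)
    (hbad : ∀ i j, i < j → j ≤ w.norm → V φ w i = V φ w j → i + j = w.norm) :
    w.norm ≤ (Eb φ d Cb + 1) * (2 * (ballF (n := n) Cb).card) + Eb φ d Cb := by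
  classical
  set L := w.norm with hL
  set E := Eb φ d Cb with hE
  set Bc := (ballF (n := n) Cb).card with hBc
  set Sm := (Finset.range (L+1)).filter (fun k => (V φ w k).norm ≤ Cb) with hSm
  have hSmcard : Sm.card ≤ 2 * Bc := by
    have hfib : ∀ u ∈ Sm.image (V φ w),
        (Sm.filter (fun x => V φ w x = u)).card ≤ 2 := by
      intro u hu
      rcases Finset.eq_empty_or_nonempty (Sm.filter (fun x => V φ w x = u)) with he | hne
      · rw [he]; simp
      · set m := (Sm.filter (fun x => V φ w x = u)).min' hne with hm
        have hsub : (Sm.filter (fun x => V φ w x = u)) ⊆ {m, L - m} := by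
          intro t ht
          rcases eq_or_ne t m with h1 | h1
          · simp [h1]
          · have hmt : m < t := lt_of_le_of_ne (Finset.min'_le _ t ht) (Ne.symm h1)
            have hmm := Finset.min'_mem _ hne
            rw [Finset.mem_filter] at ht hmm
            have htL : t ≤ L := by
              have := ht.1
              rw [hSm, Finset.mem_filter, Finset.mem_range] at this
              omega
            have := hbad m t hmt htL (by rw [hmm.2, ht.2])
            have h2 : t = L - m := by omega
            simp [h2]
        calc (Sm.filter (fun x => V φ w x = u)).card ≤ ({m, L - m} : Finset ℕ).card :=
              Finset.card_le_card hsub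
          _ ≤ 2 := Finset.card_insert_le _ _ |>.trans (by simp)
    have h1 := Finset.card_le_mul_card_image Sm 2 hfib
    have h2 : Sm.image (V φ w) ⊆ ballF (n := n) Cb := by
      intro u hu
      rw [Finset.mem_image] at hu
      obtain ⟨k, hk, rfl⟩ := hu
      rw [hSm, Finset.mem_filter] at hk
      exact mem_ballF.2 hk.2
    have h3 := Finset.card_le_card h2
    omega
  -- now the injection of multiples of (E+1) into Sm
  choose sel hsel using next_small φ d Cb hbc hw
  set M := L / (E + 1) with hM
  have hmap : ∀ j ∈ Finset.range (M+1), sel (j*(E+1)) ∈ Sm := by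
    intro j hj
    rw [Finset.mem_range] at hj
    have hjle : j * (E+1) ≤ L := by
      calc j * (E+1) ≤ M * (E+1) := Nat.mul_le_mul_right _ (by omega)
        _ ≤ L := by rw [hM]; exact Nat.div_mul_le_self L (E+1)
    obtain ⟨hs1, hs2, hs3, hs4⟩ := hsel (j*(E+1)) hjle
    rw [hSm, Finset.mem_filter, Finset.mem_range]
    exact ⟨by omega, hs4⟩
  have hinj : Set.InjOn (fun j => sel (j*(E+1))) (Finset.range (M+1)) := by
    intro j hj j' hj' heq
    dsimp only at heq
    by_contra hne
    rcases Nat.lt_or_ge j j' with hlt | hge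
    · have hjle : j * (E+1) ≤ L := by
        rw [Finset.mem_coe, Finset.mem_range] at hj
        calc j * (E+1) ≤ M * (E+1) := Nat.mul_le_mul_right _ (by omega)
          _ ≤ L := by rw [hM]; exact Nat.div_mul_le_self L (E+1)
      have hjle' : j' * (E+1) ≤ L := by
        rw [Finset.mem_coe, Finset.mem_range] at hj'
        calc j' * (E+1) ≤ M * (E+1) := Nat.mul_le_mul_right _ (by omega)
          _ ≤ L := by rw [hM]; exact Nat.div_mul_le_self L (E+1)
      obtain ⟨ha1, ha2, ha3, ha4⟩ := hsel (j*(E+1)) hjle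
      obtain ⟨hb1, hb2, hb3, hb4⟩ := hsel (j'*(E+1)) hjle'
      have hstep : (j+1) * (E+1) ≤ j' * (E+1) := Nat.mul_le_mul_right _ (by omega)
      have hexp : (j+1) * (E+1) = j * (E+1) + (E+1) := by ring
      have : sel (j*(E+1)) < sel (j'*(E+1)) := by omega
      omega
    · have hlt : j' < j := by omega
      have hjle : j * (E+1) ≤ L := by
        rw [Finset.mem_coe, Finset.mem_range] at hj
        calc j * (E+1) ≤ M * (E+1) := Nat.mul_le_mul_right _ (by omega)
          _ ≤ L := by rw [hM]; exact Nat.div_mul_le_self L (E+1)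
      have hjle' : j' * (E+1) ≤ L := by
        rw [Finset.mem_coe, Finset.mem_range] at hj'
        calc j' * (E+1) ≤ M * (E+1) := Nat.mul_le_mul_right _ (by omega)
          _ ≤ L := by rw [hM]; exact Nat.div_mul_le_self L (E+1)
      obtain ⟨ha1, ha2, ha3, ha4⟩ := hsel (j*(E+1)) hjle
      obtain ⟨hb1, hb2, hb3, hb4⟩ := hsel (j'*(E+1)) hjle'
      have hstep : (j'+1) * (E+1) ≤ j * (E+1) := Nat.mul_le_mul_right _ (by omega)
      have hexp : (j'+1) * (E+1) = j' * (E+1) + (E+1) := by ring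
      have : sel (j'*(E+1)) < sel (j*(E+1)) := by omega
      omega
  have hcard := Finset.card_le_card_of_injOn (fun j => sel (j*(E+1))) hmap hinj
  rw [Finset.card_range] at hcard
  have hdm := Nat.div_add_mod L (E+1)
  have hmod : L % (E+1) < E+1 := Nat.mod_lt _ (by omega)
  have hML : (E+1) * M + L % (E+1) = L := hdm
  have hMB : M + 1 ≤ 2 * Bc := le_trans hcard hSmcard
  have hmul : (E+1) * M ≤ (E+1) * (2*Bc) := Nat.mul_le_mul_left _ (by omega)
  have hgoal : L ≤ (E+1) * (2*Bc) + E := by omega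
  calc w.norm = L := hL.symm ▸ rfl
    _ ≤ (E+1) * (2*Bc) + E := hgoal
    _ = (Eb φ d Cb + 1) * (2 * (ballF (n := n) Cb).card) + Eb φ d Cb := by rw [hE, hBc]

/-- A good repetition splits a fixed word into two shorter fixed words. -/
lemma split_lemma {w : FreeGroup (Fin n)} (hw : φ w = w) {i j : ℕ} (hij : i < j)
    (hjL : j ≤ w.norm) (hV : V φ w i = V φ w j) (hne : i + j ≠ w.norm) :
    ∃ a b : FreeGroup (Fin n), φ a = a ∧ φ b = b ∧ w = a * b ∧
      a.norm < w.norm ∧ b.norm < w.norm := by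
  have hnPi : (P w i).norm = i := norm_P w i (by omega)
  have hnPj : (P w j).norm = j := norm_P w j (by omega)
  have hnSi : (S w i).norm = w.norm - i := norm_S w i
  have hnSj : (S w j).norm = w.norm - j := norm_S w j
  rcases Nat.lt_or_ge (i + j) w.norm with hlt | hge
  · refine ⟨P w j * (P w i)⁻¹, P w i * S w j, ?_, ?_, ?_, ?_, ?_⟩
    · rw [map_mul, map_inv, phiP φ w j, phiP φ w i, hV]
      group
    · rw [map_mul, phiP φ w i, phiS φ w hw j, hV]
      group
    · have h1 : P w j * (P w i)⁻¹ * (P w i * S w j) = P w j * S w j := by group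
      rw [h1, P_mul_S]
    · have h2 := FreeGroup.norm_mul_le (P w j) ((P w i)⁻¹)
      rw [FreeGroup.norm_inv_eq] at h2
      omega
    · have h2 := FreeGroup.norm_mul_le (P w i) (S w j)
      omega
  · have hgt : w.norm < i + j := by omega
    refine ⟨P w i * S w j, (S w j)⁻¹ * S w i, ?_, ?_, ?_, ?_, ?_⟩
    · rw [map_mul, phiP φ w i, phiS φ w hw j, hV]
      group
    · rw [map_mul, map_inv, phiS φ w hw j, phiS φ w hw i, hV]
      group
    · have h1 : P w i * S w j * ((S w j)⁻¹ * S w i) = P w i * S w i := by group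
      rw [h1, P_mul_S]
    · have h2 := FreeGroup.norm_mul_le (P w i) (S w j)
      omega
    · have h2 := FreeGroup.norm_mul_le ((S w j)⁻¹) (S w i)
      rw [FreeGroup.norm_inv_eq] at h2
      omega

end Main

end GerstenProof

/-- Gersten's theorem: the fixed subgroup `Fix(Φ) = {x : Φ(x) = x}` of an
automorphism `Φ` of a finitely generated free group is finitely generated (hence,
being a subgroup of a free group, free of finite rank). -/
theorem fixedSubgroup_fg (n : ℕ) (hn : 1 ≤ n)
    (Φ : FreeGroup (Fin n) ≃* FreeGroup (Fin n)) :
    (Φ.toMonoidHom.eqLocus (MonoidHom.id (FreeGroup (Fin n)))).FG := by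
  classical
  open GerstenProof in
  set φ := Φ.toMonoidHom with hφ
  set ψ := Φ.symm.toMonoidHom with hψ
  set K := ((Finset.univ : Finset (Fin n × Bool)).sup
      (fun a => (φ (FreeGroup.mk [a])).norm)) +
    ((Finset.univ : Finset (Fin n × Bool)).sup
      (fun a => (ψ (FreeGroup.mk [a])).norm)) + 1 with hK
  have hK1 : ∀ a : Fin n × Bool, (φ (FreeGroup.mk [a])).norm ≤ K := by
    intro a
    have h1 := Finset.le_sup (f := fun a : Fin n × Bool => (φ (FreeGroup.mk [a])).norm)
      (Finset.mem_univ a)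
    omega
  have hK2 : ∀ a : Fin n × Bool, (ψ (FreeGroup.mk [a])).norm ≤ K := by
    intro a
    have h1 := Finset.le_sup (f := fun a : Fin n × Bool => (ψ (FreeGroup.mk [a])).norm)
      (Finset.mem_univ a)
    omega
  have hKmu : ∀ x : FreeGroup (Fin n), x.norm ≤ K * (φ x).norm := by
    intro x
    have h1 : ψ (φ x) = x := Φ.symm_apply_apply x
    calc x.norm = (ψ (φ x)).norm := by rw [h1]
      _ ≤ K * (φ x).norm := lipschitz ψ K hK2 _
  set Cb := K + 2 * K * K * K with hCb
  have hbc : ∀ u v : FreeGroup (Fin n), (u*v).norm = u.norm + v.norm →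
      (φ u).norm + (φ v).norm ≤ (φ (u*v)).norm + 2 * Cb := by
    intro u v huv
    exact bounded_cancellation φ K K hK1 hKmu u v huv
  set d : Fin n × Bool := (⟨0, by omega⟩, true) with hd
  set Nb := (Eb φ d Cb + 1) * (2 * (ballF (n := n) Cb).card) + Eb φ d Cb with hNb
  set Gen : Set (FreeGroup (Fin n)) := {g | g.norm ≤ Nb ∧ φ g = g} with hGen
  apply (Subgroup.fg_iff _).2
  refine ⟨Gen, ?_, (ball_finite (n := n) Nb).subset (fun g hg => hg.1)⟩
  apply _root_.le_antisymm
  · rw [Subgroup.closure_le]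
    intro g hg
    exact hg.2
  · have key : ∀ m : ℕ, ∀ w : FreeGroup (Fin n), w.norm ≤ m → φ w = w →
        w ∈ Subgroup.closure Gen := by
      intro m
      induction m with
      | zero =>
        intro w hwm hww
        exact Subgroup.subset_closure ⟨by omega, hww⟩
      | succ m ih =>
        intro w hwm hww
        by_cases hN : w.norm ≤ Nb
        · exact Subgroup.subset_closure ⟨hN, hww⟩
        · push_neg at hN
          by_cases hgood : ∃ i j, i < j ∧ j ≤ w.norm ∧ V φ w i = V φ w j ∧ i + j ≠ w.norm
          · obtain ⟨i, j, h1, h2, h3, h4⟩ := hgood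
            obtain ⟨a, b, hfa, hfb, hab, hna, hnb⟩ := split_lemma φ hww h1 h2 h3 h4
            have hca := ih a (by omega) hfa
            have hcb := ih b (by omega) hfb
            rw [hab]
            exact mul_mem hca hcb
          · push_neg at hgood
            have hcount := count_bound φ d Cb hbc hww hgood
            omega
    intro w hw'
    have hww : φ w = w := hw'
    exact key w.norm w le_rfl hww
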